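/- arXiv:2510.21319 — 2 statements merged into one kernel-verified Lean document; each statement's English description precedes it below -/
import Mathlib

section
/- Let Q be a finite acyclic quiver without parallel paths, A = kQ, and M(V_*) = \bigoplus_i A e_i \otimes V_i \otimes e_i A, N(V_*) = \bigoplus_{\alpha: i \to j} A e_j \otimes V_i \otimes e_i A. Then there is a k-linear isomorphism Hom_{A \otimes A^{op}}(N(V_*), M(V_*)) \cong \bigoplus_{\alpha: i \to j} Hom_k(V_i, V_i \oplus V_j). -/
/- STATEMENT 6: Let Q be a finite acyclic quiver without parallel paths, A = kQ,
M(V_*) = ⊕_i A e_i ⊗ V_i ⊗ e_i A and N(V_*) = ⊕_{α : i → j} A e_j ⊗ V_i ⊗ e_i A.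
Then there is a k-linear isomorphism
  Hom_{A ⊗ A^op}(N(V_*), M(V_*)) ≅ ⊕_{α : i → j} Hom_k(V_i, V_i ⊕ V_j).

Bimodules are modeled by their components: M(V_*)_{a,b} = ⊕_{(p, ω : p⇝a, ω' : b⇝p)} V_p and
N(V_*)_{a,b} = ⊕_{(α : i→j, ω : j⇝a, ω' : b⇝i)} V_i, with structure maps the inclusions of
direct summands; bimodule homomorphisms are families of linear maps on components commuting
with all structure maps. -/

open Quiver DirectSum

set_option synthInstance.maxHeartbeats 400000
set_option maxHeartbeats 1000000

/-- The set of arrows of `Q`. -/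
abbrev Arr (Q : Type) [Quiver.{0} Q] : Type := Σ i j : Q, i ⟶ j

/-- Index of the direct summands of `M(V_*)_{a,b}`. -/
abbrev MIdx (Q : Type) [Quiver.{0} Q] (a b : Q) : Type := Σ p : Q, Path p a × Path b p

/-- The component `M(V_*)_{a,b}`. -/
abbrev Mc (F : Type) [Field F] (Q : Type) [Quiver.{0} Q]
    (V : Q → Type) [∀ p, AddCommGroup (V p)] [∀ p, Module F (V p)] (a b : Q) : Type :=
  ⨁ (t : MIdx Q a b), V t.1

/-- Index of the direct summands of `N(V_*)_{a,b}`: for each arrow `α : i → j`, pairs of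
paths `(j ⇝ a, b ⇝ i)`. -/
abbrev NIdx (Q : Type) [Quiver.{0} Q] (a b : Q) : Type :=
  Σ ar : Arr Q, Path ar.2.1 a × Path b ar.1

/-- The component `N(V_*)_{a,b}`. -/
abbrev Nc (F : Type) [Field F] (Q : Type) [Quiver.{0} Q]
    (V : Q → Type) [∀ p, AddCommGroup (V p)] [∀ p, Module F (V p)] (a b : Q) : Type :=
  ⨁ (t : NIdx Q a b), V t.1.1

open scoped Classical in
/-- Left structure map of `M(V_*)` along `γ : a ⟶ a'`. -/
noncomputable def MlAct (F : Type) [Field F] (Q : Type) [Quiver.{0} Q]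
    (V : Q → Type) [∀ p, AddCommGroup (V p)] [∀ p, Module F (V p)]
    {a a' : Q} (γ : a ⟶ a') (b : Q) : Mc F Q V a b →ₗ[F] Mc F Q V a' b :=
  DirectSum.toModule F (MIdx Q a b) _ fun t =>
    DirectSum.lof F (MIdx Q a' b) (fun s => V s.1) ⟨t.1, t.2.1.cons γ, t.2.2⟩

open scoped Classical in
/-- Right structure map of `M(V_*)` along `δ : b' ⟶ b`. -/
noncomputable def MrAct (F : Type) [Field F] (Q : Type) [Quiver.{0} Q]
    (V : Q → Type) [∀ p, AddCommGroup (V p)] [∀ p, Module F (V p)]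
    (a : Q) {b b' : Q} (δ : b' ⟶ b) : Mc F Q V a b →ₗ[F] Mc F Q V a b' :=
  DirectSum.toModule F (MIdx Q a b) _ fun t =>
    DirectSum.lof F (MIdx Q a b') (fun s => V s.1) ⟨t.1, t.2.1, (δ.toPath).comp t.2.2⟩

open scoped Classical in
/-- Left structure map of `N(V_*)` along `γ : a ⟶ a'`. -/
noncomputable def NlAct (F : Type) [Field F] (Q : Type) [Quiver.{0} Q]
    (V : Q → Type) [∀ p, AddCommGroup (V p)] [∀ p, Module F (V p)]
    {a a' : Q} (γ : a ⟶ a') (b : Q) : Nc F Q V a b →ₗ[F] Nc F Q V a' b :=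
  DirectSum.toModule F (NIdx Q a b) _ fun t =>
    DirectSum.lof F (NIdx Q a' b) (fun s => V s.1.1) ⟨t.1, t.2.1.cons γ, t.2.2⟩

open scoped Classical in
/-- Right structure map of `N(V_*)` along `δ : b' ⟶ b`. -/
noncomputable def NrAct (F : Type) [Field F] (Q : Type) [Quiver.{0} Q]
    (V : Q → Type) [∀ p, AddCommGroup (V p)] [∀ p, Module F (V p)]
    (a : Q) {b b' : Q} (δ : b' ⟶ b) : Nc F Q V a b →ₗ[F] Nc F Q V a b' :=
  DirectSum.toModule F (NIdx Q a b) _ fun t =>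
    DirectSum.lof F (NIdx Q a b') (fun s => V s.1.1) ⟨t.1, t.2.1, (δ.toPath).comp t.2.2⟩

/-- The space of bimodule homomorphisms `N(V_*) → M(V_*)`. -/
noncomputable def bimodHomNM (F : Type) [Field F] (Q : Type) [Quiver.{0} Q]
    (V : Q → Type) [∀ p, AddCommGroup (V p)] [∀ p, Module F (V p)] :
    Submodule F (∀ a b : Q, Nc F Q V a b →ₗ[F] Mc F Q V a b) where
  carrier := {f |
    (∀ (a a' b : Q) (γ : a ⟶ a'),
      (MlAct F Q V γ b).comp (f a b) = (f a' b).comp (NlAct F Q V γ b)) ∧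
    (∀ (a b b' : Q) (δ : b' ⟶ b),
      (MrAct F Q V a δ).comp (f a b) = (f a b').comp (NrAct F Q V a δ))}
  add_mem' := by
    rintro f g ⟨hf1, hf2⟩ ⟨hg1, hg2⟩
    refine ⟨fun a a' b γ => ?_, fun a b b' δ => ?_⟩
    · simp [LinearMap.comp_add, LinearMap.add_comp, hf1 a a' b γ, hg1 a a' b γ]
    · simp [LinearMap.comp_add, LinearMap.add_comp, hf2 a b b' δ, hg2 a b b' δ]
  zero_mem' := by
    refine ⟨fun a a' b γ => ?_, fun a b b' δ => ?_⟩ <;> simp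
  smul_mem' := by
    rintro c f ⟨h1, h2⟩
    refine ⟨fun a a' b γ => ?_, fun a b b' δ => ?_⟩
    · simp [LinearMap.comp_smul, LinearMap.smul_comp, h1 a a' b γ]
    · simp [LinearMap.comp_smul, LinearMap.smul_comp, h2 a b b' δ]


open scoped Classical

section Aux

variable (F : Type) [Field F] (Q : Type) [Quiver.{0} Q]
  (V : Q → Type) [∀ p, AddCommGroup (V p)] [∀ p, Module F (V p)]

@[simp] lemma MlAct_lof {a a' : Q} (γ : a ⟶ a') (b : Q) (t : MIdx Q a b) (v : V t.1) :
    MlAct F Q V γ b (DirectSum.lof F (MIdx Q a b) (fun s => V s.1) t v) =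
      DirectSum.lof F (MIdx Q a' b) (fun s => V s.1) ⟨t.1, t.2.1.cons γ, t.2.2⟩ v := by
  simp [MlAct]

@[simp] lemma MrAct_lof (a : Q) {b b' : Q} (δ : b' ⟶ b) (t : MIdx Q a b) (v : V t.1) :
    MrAct F Q V a δ (DirectSum.lof F (MIdx Q a b) (fun s => V s.1) t v) =
      DirectSum.lof F (MIdx Q a b') (fun s => V s.1) ⟨t.1, t.2.1, (δ.toPath).comp t.2.2⟩ v := by
  simp [MrAct]

@[simp] lemma NlAct_lof {a a' : Q} (γ : a ⟶ a') (b : Q) (t : NIdx Q a b) (v : V t.1.1) :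
    NlAct F Q V γ b (DirectSum.lof F (NIdx Q a b) (fun s => V s.1.1) t v) =
      DirectSum.lof F (NIdx Q a' b) (fun s => V s.1.1) ⟨t.1, t.2.1.cons γ, t.2.2⟩ v := by
  simp [NlAct]

@[simp] lemma NrAct_lof (a : Q) {b b' : Q} (δ : b' ⟶ b) (t : NIdx Q a b) (v : V t.1.1) :
    NrAct F Q V a δ (DirectSum.lof F (NIdx Q a b) (fun s => V s.1.1) t v) =
      DirectSum.lof F (NIdx Q a b') (fun s => V s.1.1) ⟨t.1, t.2.1, (δ.toPath).comp t.2.2⟩ v := by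
  simp [NrAct]


lemma Mlof_congr {a b p : Q} {σ σ' : Path p a} {τ τ' : Path b p} (h1 : σ = σ')
    (h2 : τ = τ') (v : V p) :
    DirectSum.lof F (MIdx Q a b) (fun s => V s.1) ⟨p, σ, τ⟩ v =
      DirectSum.lof F (MIdx Q a b) (fun s => V s.1) ⟨p, σ', τ'⟩ v := by
  subst h1; subst h2; rfl

lemma Nlof_congr {a b : Q} {t : Arr Q} {σ σ' : Path t.2.1 a} {τ τ' : Path b t.1} (h1 : σ = σ')
    (h2 : τ = τ') (v : V t.1) :
    DirectSum.lof F (NIdx Q a b) (fun s => V s.1.1) ⟨t, σ, τ⟩ v =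
      DirectSum.lof F (NIdx Q a b) (fun s => V s.1.1) ⟨t, σ', τ'⟩ v := by
  subst h1; subst h2; rfl

/-- Iterated left structure map of `M` along a path. -/
noncomputable def MlPath : ∀ {a a' : Q}, Path a a' → ∀ b : Q, Mc F Q V a b →ₗ[F] Mc F Q V a' b
  | _, _, Path.nil, _ => LinearMap.id
  | _, _, Path.cons p e, b => (MlAct F Q V e b).comp (MlPath p b)

/-- Iterated right structure map of `M` along a path. -/
noncomputable def MrPath (a : Q) : ∀ {b' b : Q}, Path b' b → Mc F Q V a b →ₗ[F] Mc F Q V a b'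
  | _, _, Path.nil => LinearMap.id
  | _, _, Path.cons p e => (MrPath a p).comp (MrAct F Q V a e)

/-- Iterated left structure map of `N` along a path. -/
noncomputable def NlPath : ∀ {a a' : Q}, Path a a' → ∀ b : Q, Nc F Q V a b →ₗ[F] Nc F Q V a' b
  | _, _, Path.nil, _ => LinearMap.id
  | _, _, Path.cons p e, b => (NlAct F Q V e b).comp (NlPath p b)

/-- Iterated right structure map of `N` along a path. -/
noncomputable def NrPath (a : Q) : ∀ {b' b : Q}, Path b' b → Nc F Q V a b →ₗ[F] Nc F Q V a b'
  | _, _, Path.nil => LinearMap.id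
  | _, _, Path.cons p e => (NrPath a p).comp (NrAct F Q V a e)

@[simp] lemma MlPath_lof {a a' : Q} (ρ : Path a a') (b : Q) (p : Q) (σ : Path p a)
    (τ : Path b p) (v : V p) :
    MlPath F Q V ρ b (DirectSum.lof F (MIdx Q a b) (fun s => V s.1) ⟨p, σ, τ⟩ v) =
      DirectSum.lof F (MIdx Q a' b) (fun s => V s.1) ⟨p, σ.comp ρ, τ⟩ v := by
  induction ρ with
  | nil => simp [MlPath]
  | cons ρ e ih => simp [MlPath, ih]

@[simp] lemma MrPath_lof (a : Q) {b' b : Q} (ρ : Path b' b) (p : Q) (σ : Path p a)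
    (τ : Path b p) (v : V p) :
    MrPath F Q V a ρ (DirectSum.lof F (MIdx Q a b) (fun s => V s.1) ⟨p, σ, τ⟩ v) =
      DirectSum.lof F (MIdx Q a b') (fun s => V s.1) ⟨p, σ, ρ.comp τ⟩ v := by
  induction ρ with
  | nil =>
      simp only [MrPath, LinearMap.id_coe, id_eq]
      exact Mlof_congr F Q V rfl (Path.nil_comp τ).symm v
  | cons ρ e ih =>
      simp only [MrPath, LinearMap.comp_apply]
      rw [MrAct_lof, ih]
      exact Mlof_congr F Q V rfl (Path.comp_assoc ρ e.toPath τ).symm v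

@[simp] lemma NlPath_lof {a a' : Q} (ρ : Path a a') (b : Q) (t : Arr Q)
    (σ : Path t.2.1 a) (τ : Path b t.1) (v : V t.1) :
    NlPath F Q V ρ b (DirectSum.lof F (NIdx Q a b) (fun s => V s.1.1) ⟨t, σ, τ⟩ v) =
      DirectSum.lof F (NIdx Q a' b) (fun s => V s.1.1) ⟨t, σ.comp ρ, τ⟩ v := by
  induction ρ with
  | nil => simp [NlPath]
  | cons ρ e ih => simp [NlPath, ih]

@[simp] lemma NrPath_lof (a : Q) {b' b : Q} (ρ : Path b' b) (t : Arr Q)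
    (σ : Path t.2.1 a) (τ : Path b t.1) (v : V t.1) :
    NrPath F Q V a ρ (DirectSum.lof F (NIdx Q a b) (fun s => V s.1.1) ⟨t, σ, τ⟩ v) =
      DirectSum.lof F (NIdx Q a b') (fun s => V s.1.1) ⟨t, σ, ρ.comp τ⟩ v := by
  induction ρ with
  | nil =>
      simp only [NrPath, LinearMap.id_coe, id_eq]
      exact Nlof_congr F Q V rfl (Path.nil_comp τ).symm v
  | cons ρ e ih =>
      simp only [NrPath, LinearMap.comp_apply]
      rw [NrAct_lof, ih]
      exact Nlof_congr F Q V rfl (Path.comp_assoc ρ e.toPath τ).symm v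

lemma f_NlPath (f : bimodHomNM F Q V) {a a' : Q} (ρ : Path a a') (b : Q) :
    (f.1 a' b).comp (NlPath F Q V ρ b) = (MlPath F Q V ρ b).comp (f.1 a b) := by
  induction ρ with
  | nil => simp [NlPath, MlPath]
  | cons ρ e ih =>
      simp only [NlPath, MlPath]
      rw [← LinearMap.comp_assoc, ← f.2.1 _ _ b e, LinearMap.comp_assoc, ih,
        ← LinearMap.comp_assoc]

lemma f_NrPath (f : bimodHomNM F Q V) (a : Q) {b' b : Q} (ρ : Path b' b) :
    (f.1 a b').comp (NrPath F Q V a ρ) = (MrPath F Q V a ρ).comp (f.1 a b) := by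
  induction ρ with
  | nil => simp [NrPath, MrPath]
  | cons ρ e ih =>
      simp only [NrPath, MrPath]
      rw [← LinearMap.comp_assoc, ih, LinearMap.comp_assoc, ← f.2.2 a _ _ e,
        ← LinearMap.comp_assoc]

lemma midx_cases (hacyclic : ∀ (a : Q) (p : Path a a), p = Path.nil)
    (hnopar : ∀ (a b : Q) (p q : Path a b), p = q)
    {i j : Q} (α : i ⟶ j) (s : MIdx Q j i) :
    s = ⟨i, α.toPath, Path.nil⟩ ∨ s = ⟨j, Path.nil, α.toPath⟩ := by
  obtain ⟨p, σ, τ⟩ := s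
  have h : τ.comp σ = α.toPath := hnopar i j _ _
  have hlen : τ.length + σ.length = 1 := by
    simpa [Quiver.Hom.toPath] using congrArg Path.length h
  rcases Nat.eq_zero_or_pos τ.length with h0 | h0
  · obtain rfl := Path.eq_of_length_zero τ h0
    obtain rfl : τ = Path.nil := hacyclic i τ
    obtain rfl : σ = α.toPath := hnopar i j σ α.toPath
    exact Or.inl rfl
  · have h1 : σ.length = 0 := by omega
    obtain rfl := (Path.eq_of_length_zero σ h1).symm
    obtain rfl : σ = Path.nil := hacyclic j σ
    obtain rfl : τ = α.toPath := hnopar i j τ α.toPath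
    exact Or.inr rfl

/-- The component-wise hom `N → M` attached to a family `g`. -/
noncomputable def PsiFun (g : ∀ ar : Arr Q, V ar.1 →ₗ[F] V ar.1 × V ar.2.1) (a b : Q) :
    Nc F Q V a b →ₗ[F] Mc F Q V a b :=
  DirectSum.toModule F (NIdx Q a b) _ fun t =>
    ((DirectSum.lof F (MIdx Q a b) (fun s => V s.1)
        ⟨t.1.1, t.1.2.2.toPath.comp t.2.1, t.2.2⟩).comp
      ((LinearMap.fst F _ _).comp (g t.1))) +
    ((DirectSum.lof F (MIdx Q a b) (fun s => V s.1)
        ⟨t.1.2.1, t.2.1, t.2.2.comp t.1.2.2.toPath⟩).comp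
      ((LinearMap.snd F _ _).comp (g t.1)))

@[simp] lemma PsiFun_lof (g : ∀ ar : Arr Q, V ar.1 →ₗ[F] V ar.1 × V ar.2.1) (a b : Q)
    (t : NIdx Q a b) (v : V t.1.1) :
    PsiFun F Q V g a b (DirectSum.lof F (NIdx Q a b) (fun s => V s.1.1) t v) =
      DirectSum.lof F (MIdx Q a b) (fun s => V s.1)
        ⟨t.1.1, t.1.2.2.toPath.comp t.2.1, t.2.2⟩ ((g t.1 v).1) +
      DirectSum.lof F (MIdx Q a b) (fun s => V s.1)
        ⟨t.1.2.1, t.2.1, t.2.2.comp t.1.2.2.toPath⟩ ((g t.1 v).2) := by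
  simp [PsiFun]

lemma PsiFun_mem (g : ∀ ar : Arr Q, V ar.1 →ₗ[F] V ar.1 × V ar.2.1) :
    (fun a b => PsiFun F Q V g a b) ∈ bimodHomNM F Q V := by
  constructor
  · intro a a' b γ
    apply DirectSum.linearMap_ext
    intro t
    apply LinearMap.ext
    intro v
    simp only [LinearMap.comp_apply]
    rw [NlAct_lof, PsiFun_lof, PsiFun_lof, map_add, MlAct_lof, MlAct_lof]
    rfl
  · intro a b b' δ
    apply DirectSum.linearMap_ext
    intro t
    apply LinearMap.ext
    intro v
    simp only [LinearMap.comp_apply]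
    rw [NrAct_lof, PsiFun_lof, PsiFun_lof, map_add, MrAct_lof, MrAct_lof]
    exact congrArg₂ (· + ·)
      (Mlof_congr F Q V rfl rfl _)
      (Mlof_congr F Q V rfl (Path.comp_assoc δ.toPath t.2.2 t.1.2.2.toPath).symm _)

/-- The forward map. -/
noncomputable def PhiMap : ↥(bimodHomNM F Q V) →ₗ[F]
    ∀ ar : Arr Q, V ar.1 →ₗ[F] V ar.1 × V ar.2.1 where
  toFun f ar := LinearMap.prod
    ((DirectSum.component F (MIdx Q ar.2.1 ar.1) (fun s => V s.1)
        ⟨ar.1, ar.2.2.toPath, Path.nil⟩).comp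
      ((f.1 ar.2.1 ar.1).comp (DirectSum.lof F (NIdx Q ar.2.1 ar.1) (fun s => V s.1.1)
        ⟨ar, Path.nil, Path.nil⟩)))
    ((DirectSum.component F (MIdx Q ar.2.1 ar.1) (fun s => V s.1)
        ⟨ar.2.1, Path.nil, ar.2.2.toPath⟩).comp
      ((f.1 ar.2.1 ar.1).comp (DirectSum.lof F (NIdx Q ar.2.1 ar.1) (fun s => V s.1.1)
        ⟨ar, Path.nil, Path.nil⟩)))
  map_add' f g := by
    funext ar
    apply LinearMap.ext
    intro v
    simp [LinearMap.prod, Prod.ext_iff]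
  map_smul' c f := by
    funext ar
    apply LinearMap.ext
    intro v
    simp [LinearMap.prod, Prod.ext_iff]

/-- The backward map. -/
noncomputable def PsiMap : (∀ ar : Arr Q, V ar.1 →ₗ[F] V ar.1 × V ar.2.1) →ₗ[F]
    ↥(bimodHomNM F Q V) where
  toFun g := ⟨fun a b => PsiFun F Q V g a b, PsiFun_mem F Q V g⟩
  map_add' g g' := by
    apply Subtype.ext
    funext a b
    apply DirectSum.linearMap_ext
    intro t
    apply LinearMap.ext
    intro v
    simp
    abel
  map_smul' c g := by
    apply Subtype.ext
    funext a b
    apply DirectSum.linearMap_ext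
    intro t
    apply LinearMap.ext
    intro v
    simp

lemma M_decompose (hacyclic : ∀ (a : Q) (p : Path a a), p = Path.nil)
    (hnopar : ∀ (a b : Q) (p q : Path a b), p = q)
    {i j : Q} (α : i ⟶ j) (u : Mc F Q V j i) :
    u = DirectSum.lof F (MIdx Q j i) (fun s => V s.1) ⟨i, α.toPath, Path.nil⟩
          (DirectSum.component F (MIdx Q j i) (fun s => V s.1) ⟨i, α.toPath, Path.nil⟩ u) +
        DirectSum.lof F (MIdx Q j i) (fun s => V s.1) ⟨j, Path.nil, α.toPath⟩
          (DirectSum.component F (MIdx Q j i) (fun s => V s.1) ⟨j, Path.nil, α.toPath⟩ u) := by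
  have hij : i ≠ j := by
    intro h
    subst h
    have h1 := hacyclic i α.toPath
    simpa [Quiver.Hom.toPath] using congrArg Path.length h1
  have hAB : (⟨i, α.toPath, Path.nil⟩ : MIdx Q j i) ≠ ⟨j, Path.nil, α.toPath⟩ :=
    fun h => hij (congrArg Sigma.fst h)
  refine DirectSum.ext_component F fun s => ?_
  rcases midx_cases (Q := Q) hacyclic hnopar α s with rfl | rfl
  · rw [map_add, DirectSum.component.lof_self, DirectSum.component.of,
      dif_neg (Ne.symm hAB), add_zero]
  · rw [map_add, DirectSum.component.lof_self, DirectSum.component.of,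
      dif_neg hAB, zero_add]

end Aux

/-- There is a `k`-linear isomorphism
`Hom_{A ⊗ A^op}(N(V_*), M(V_*)) ≅ ⊕_{α : i → j} Hom_k(V_i, V_i ⊕ V_j)`. -/
theorem bimodHomNM_iso (F : Type) [Field F] (Q : Type) [Quiver.{0} Q]
    [Fintype Q] [∀ a b : Q, Fintype (a ⟶ b)]
    (hacyclic : ∀ (a : Q) (p : Path a a), p = Path.nil)
    (hnopar : ∀ (a b : Q) (p q : Path a b), p = q)
    (V : Q → Type) [∀ p, AddCommGroup (V p)] [∀ p, Module F (V p)]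
    [∀ p, FiniteDimensional F (V p)] :
    Nonempty (↥(bimodHomNM F Q V) ≃ₗ[F]
      ∀ ar : Arr Q, (V ar.1 →ₗ[F] V ar.1 × V ar.2.1)) := by
  have hij : ∀ {i j : Q}, (i ⟶ j) → i ≠ j := by
    intro i j α h
    subst h
    have h1 := hacyclic i α.toPath
    simpa [Quiver.Hom.toPath] using congrArg Path.length h1
  refine ⟨LinearEquiv.ofLinear (PhiMap F Q V) (PsiMap F Q V) ?_ ?_⟩
  · -- PhiMap ∘ PsiMap = id
    apply LinearMap.ext; intro g
    funext ar
    apply LinearMap.ext; intro v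
    obtain ⟨i, j, α⟩ := ar
    have hAB : (⟨i, α.toPath, Path.nil⟩ : MIdx Q j i) ≠ ⟨j, Path.nil, α.toPath⟩ :=
      fun h => hij α (congrArg Sigma.fst h)
    have hval : PsiFun F Q V g j i (DirectSum.lof F (NIdx Q j i) (fun s => V s.1.1)
          ⟨⟨i, j, α⟩, Path.nil, Path.nil⟩ v) =
        DirectSum.lof F (MIdx Q j i) (fun s => V s.1) ⟨i, α.toPath, Path.nil⟩
          ((g ⟨i, j, α⟩ v).1) +
        DirectSum.lof F (MIdx Q j i) (fun s => V s.1) ⟨j, Path.nil, α.toPath⟩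
          ((g ⟨i, j, α⟩ v).2) :=
      PsiFun_lof F Q V g j i ⟨⟨i, j, α⟩, Path.nil, Path.nil⟩ v
    show Prod.mk
        (DirectSum.component F (MIdx Q j i) (fun s => V s.1) ⟨i, α.toPath, Path.nil⟩
          (PsiFun F Q V g j i (DirectSum.lof F (NIdx Q j i) (fun s => V s.1.1)
            ⟨⟨i, j, α⟩, Path.nil, Path.nil⟩ v)))
        (DirectSum.component F (MIdx Q j i) (fun s => V s.1) ⟨j, Path.nil, α.toPath⟩
          (PsiFun F Q V g j i (DirectSum.lof F (NIdx Q j i) (fun s => V s.1.1)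
            ⟨⟨i, j, α⟩, Path.nil, Path.nil⟩ v))) = g ⟨i, j, α⟩ v
    rw [hval]
    rw [map_add, map_add, DirectSum.component.lof_self, DirectSum.component.lof_self,
      DirectSum.component.of, DirectSum.component.of, dif_neg hAB, dif_neg (Ne.symm hAB),
      add_zero, zero_add]
  · -- PsiMap ∘ PhiMap = id
    apply LinearMap.ext; intro f
    apply Subtype.ext
    funext a b
    apply DirectSum.linearMap_ext; intro t
    apply LinearMap.ext; intro v
    obtain ⟨⟨i, j, α⟩, ω, ω'⟩ := t
    have h0 : DirectSum.lof F (NIdx Q a b) (fun s => V s.1.1) ⟨⟨i, j, α⟩, ω, ω'⟩ v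
        = NlPath F Q V ω b (NrPath F Q V j ω'
            (DirectSum.lof F (NIdx Q j i) (fun s => V s.1.1) ⟨⟨i, j, α⟩, Path.nil, Path.nil⟩ v)) := by
      rw [NrPath_lof, NlPath_lof]
      exact Nlof_congr F Q V (Path.nil_comp ω).symm rfl v
    have h1 : f.1 a b (DirectSum.lof F (NIdx Q a b) (fun s => V s.1.1) ⟨⟨i, j, α⟩, ω, ω'⟩ v)
        = MlPath F Q V ω b (MrPath F Q V j ω' (f.1 j i
            (DirectSum.lof F (NIdx Q j i) (fun s => V s.1.1) ⟨⟨i, j, α⟩, Path.nil, Path.nil⟩ v))) := by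
      rw [h0, ← LinearMap.comp_apply (f.1 a b), f_NlPath F Q V f ω b, LinearMap.comp_apply,
        ← LinearMap.comp_apply (f.1 j b), f_NrPath F Q V f j ω', LinearMap.comp_apply]
    show PsiFun F Q V (PhiMap F Q V f) a b
        (DirectSum.lof F (NIdx Q a b) (fun s => V s.1.1) ⟨⟨i, j, α⟩, ω, ω'⟩ v)
      = f.1 a b (DirectSum.lof F (NIdx Q a b) (fun s => V s.1.1) ⟨⟨i, j, α⟩, ω, ω'⟩ v)
    rw [h1, M_decompose F Q V hacyclic hnopar α (f.1 j i
        (DirectSum.lof F (NIdx Q j i) (fun s => V s.1.1) ⟨⟨i, j, α⟩, Path.nil, Path.nil⟩ v)),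
      map_add, map_add, MrPath_lof, MrPath_lof,
      MlPath_lof, MlPath_lof, PsiFun_lof]
    exact congrArg₂ (· + ·)
      (Mlof_congr F Q V rfl rfl _)
      (Mlof_congr F Q V (Path.nil_comp ω) rfl _).symm
end

section
/- Let Q be a finite acyclic quiver without parallel paths. With M(V_*) = \bigoplus_i A e_i \otimes V_i \otimes e_i A and N(V_*) = \bigoplus_{\alpha: i \to j} A e_j \otimes V_i \otimes e_i A, the difference of dimension vectors dim M(V_*) - dim N(V_*) equals the vector f, where f_{i,j} = dim V_i if there exists a path from j to i in Q, and f_{i,j} = 0 otherwise. Concretely: for all vertices i, j, dim_k e_i M(V_*) e_j - dim_k e_i N(V_*) e_j = f_{i,j}. -/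
/- STATEMENT 9: Let Q be a finite acyclic quiver without parallel paths. With
M(V_*) = ⊕_p A e_p ⊗ V_p ⊗ e_p A and N(V_*) = ⊕_{α : p → q} A e_q ⊗ V_p ⊗ e_p A,
the difference of dimension vectors dim M(V_*) - dim N(V_*) equals the vector f with
f_{i,j} = dim V_i if there is a path from j to i and f_{i,j} = 0 otherwise.  Concretely,
for all vertices i, j:
  dim_k e_i M(V_*) e_j = dim_k e_i N(V_*) e_j + f_{i,j},
where dim_k e_i M(V_*) e_j = Σ_p dim V_p · #{(ω : p ⇝ i, ω' : j ⇝ p)} and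
dim_k e_i N(V_*) e_j = Σ_{α : p → q} dim V_p · #{(ω : q ⇝ i, ω' : j ⇝ p)}. -/

open Quiver

section Aux

variable {Q : Type} [Quiver.{0} Q]

/-- Reassemble a decomposed path: either `nil` (when `p = i`) or a first arrow
followed by the rest. -/
def joinAux {p i : Q} : (PLift (p = i)) ⊕ (Σ q : Q, (p ⟶ q) × Path q i) → Path p i
  | .inl h => h.down ▸ Path.nil
  | .inr ⟨_, β, ρ⟩ => (β.toPath).comp ρ

/-- Decompose a path at its first arrow. -/
def splitAux : ∀ {p i : Q}, Path p i → (PLift (p = i)) ⊕ (Σ q : Q, (p ⟶ q) × Path q i)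
  | _, _, .nil => .inl ⟨rfl⟩
  | _, _, .cons ω α =>
    match splitAux ω with
    | .inl h => .inr ⟨_, h.down.symm ▸ α, .nil⟩
    | .inr ⟨q, β, ρ⟩ => .inr ⟨q, β, ρ.cons α⟩

@[simp] theorem splitAux_nil {p : Q} : splitAux (Path.nil : Path p p) = .inl ⟨rfl⟩ := by
  rw [splitAux]

theorem splitAux_cons {p b i : Q} (ω : Path p b) (α : b ⟶ i) :
    splitAux (ω.cons α) = match splitAux ω with
    | .inl h => .inr ⟨_, h.down.symm ▸ α, .nil⟩
    | .inr ⟨q, β, ρ⟩ => .inr ⟨q, β, ρ.cons α⟩ := by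
  rw [splitAux]

theorem splitAux_joinAux {p i : Q} (x : (PLift (p = i)) ⊕ (Σ q : Q, (p ⟶ q) × Path q i)) :
    splitAux (joinAux x) = x := by
  rcases x with ⟨⟨h⟩⟩ | ⟨q, β, ρ⟩
  · subst h; simp [joinAux]
  · induction ρ with
    | nil => simp [joinAux, Hom.toPath, splitAux_cons]
    | cons ρ' α ih =>
      show splitAux ((β.toPath.comp ρ').cons α) = _
      rw [splitAux_cons]
      simp only [joinAux] at ih
      rw [ih]

theorem joinAux_splitAux {p i : Q} (ω : Path p i) : joinAux (splitAux ω) = ω := by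
  induction ω with
  | nil => simp [joinAux]
  | cons ω' α ih =>
    rw [splitAux_cons]
    rcases hsp : splitAux ω' with ⟨⟨h⟩⟩ | ⟨q, β, ρ⟩
    · subst h
      rw [hsp] at ih
      simp only [joinAux] at ih ⊢
      subst ih
      rfl
    · rw [hsp] at ih
      simp only [joinAux] at ih ⊢
      rw [← ih]
      rfl

/-- First-arrow decomposition of paths: a path `p ⇝ i` is either trivial (so `p = i`)
or consists of a first arrow `p ⟶ q` followed by a path `q ⇝ i`. -/
def pathEquiv (p i : Q) : Path p i ≃ (PLift (p = i)) ⊕ (Σ q : Q, (p ⟶ q) × Path q i) :=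
  ⟨splitAux, joinAux, joinAux_splitAux, splitAux_joinAux⟩

end Aux

open scoped Classical in
/-- The recursion for the number of paths obtained by splitting off the first arrow. -/
lemma card_path_rec (Q : Type) [Quiver.{0} Q] [Fintype Q] [∀ a b : Q, Fintype (a ⟶ b)]
    [∀ a b : Q, Fintype (Path a b)] (p i : Q) :
    Fintype.card (Path p i) =
      (if p = i then 1 else 0) +
        ∑ q : Q, Fintype.card (p ⟶ q) * Fintype.card (Path q i) := by
  rw [Fintype.card_congr (pathEquiv p i)]
  simp [Fintype.card_sigma, Fintype.card_prod]
  split_ifs with h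
  · subst h; simp
  · rw [Fintype.card_eq_zero_iff]
    exact ⟨fun x => h x.down⟩

open scoped Classical in
/-- For every pair of vertices `(i,j)`,
`dim e_i M(V_*) e_j - dim e_i N(V_*) e_j = f_{i,j}`. -/
theorem dim_M_sub_dim_N (F : Type) [Field F] (Q : Type) [Quiver.{0} Q]
    [Fintype Q] [∀ a b : Q, Fintype (a ⟶ b)] [∀ a b : Q, Fintype (Path a b)]
    (hacyclic : ∀ (a : Q) (p : Path a a), p = Path.nil)
    (hnopar : ∀ (a b : Q) (p q : Path a b), p = q)
    (V : Q → Type) [∀ p, AddCommGroup (V p)] [∀ p, Module F (V p)]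
    [∀ p, FiniteDimensional F (V p)] (i j : Q) :
    (∑ p : Q, Module.finrank F (V p) *
        (Fintype.card (Path p i) * Fintype.card (Path j p))) =
      (∑ ar : Arr Q, Module.finrank F (V ar.1) *
        (Fintype.card (Path ar.2.1 i) * Fintype.card (Path j ar.1))) +
      (if Nonempty (Path j i) then Module.finrank F (V i) else 0) := by
  have hsub : ∀ a b : Q, Fintype.card (Path a b) = if Nonempty (Path a b) then 1 else 0 := by
    intro a b
    haveI : Subsingleton (Path a b) := ⟨hnopar a b⟩
    split_ifs with h
    · have h1 : Fintype.card (Path a b) ≤ 1 :=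
        Fintype.card_le_one_iff_subsingleton.mpr inferInstance
      have h2 : 0 < Fintype.card (Path a b) := @Fintype.card_pos _ _ h
      omega
    · rw [Fintype.card_eq_zero_iff]; exact not_nonempty_iff.mp h
  have key : ∀ p : Q, Module.finrank F (V p) *
        (Fintype.card (Path p i) * Fintype.card (Path j p)) =
      (if p = i then Module.finrank F (V i) * Fintype.card (Path j i) else 0) +
        ∑ q : Q, Fintype.card (p ⟶ q) * (Module.finrank F (V p) *
          (Fintype.card (Path q i) * Fintype.card (Path j p))) := by
    intro p
    rw [card_path_rec, add_mul, mul_add, Finset.sum_mul, Finset.mul_sum]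
    congr 1
    · split_ifs with h
      · subst h; ring
      · simp
    · exact Finset.sum_congr rfl fun q _ => by ring
  rw [Finset.sum_congr rfl fun p _ => key p, Finset.sum_add_distrib,
    Finset.sum_ite_eq' Finset.univ i]
  have hArr : (∑ ar : Arr Q, Module.finrank F (V ar.1) *
        (Fintype.card (Path ar.2.1 i) * Fintype.card (Path j ar.1))) =
      ∑ p : Q, ∑ q : Q, Fintype.card (p ⟶ q) * (Module.finrank F (V p) *
        (Fintype.card (Path q i) * Fintype.card (Path j p))) := by
    rw [← Finset.univ_sigma_univ, Finset.sum_sigma]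
    refine Finset.sum_congr rfl fun p _ => ?_
    rw [← Finset.univ_sigma_univ, Finset.sum_sigma]
    refine Finset.sum_congr rfl fun q _ => ?_
    dsimp only
    show ∑ _s : p ⟶ q, Module.finrank F (V p) * (Fintype.card (Path q i) * Fintype.card (Path j p)) = _
    rw [Finset.sum_const, smul_eq_mul, Finset.card_univ]
  rw [hArr, hsub j i]
  simp only [Finset.mem_univ, if_true, mul_ite, mul_one, mul_zero]
  exact add_comm _ _
end
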